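/- Inverting one disjoint cycle of a permutation multiplies its standard-representation so(N) weight by (−1) raised to the length of that cycle: let N ≥ 1, m ≥ 1, and let β, γ be permutations of {1,…,m} with disjoint supports such that β is a cycle whose support has cardinality ℓ. Then W_N(β⁻¹ ∘ γ) = (−1)^ℓ · W_N(β ∘ γ). -/

import Mathlib

open Matrix

/-- The standard generators `X_{ij} = E_{ij} - E_{N+1-j, N+1-i}` of `so(N)`,
as `N × N` matrices over `ℚ` (indices zero-based, so `N+1-i` becomes `Fin.rev i`). -/
noncomputable def soGen (N : ℕ) (i j : Fin N) : Matrix (Fin N) (Fin N) ℚ :=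
  Matrix.single i j 1 - Matrix.single j.rev i.rev 1

/-- `W_N(α) = Tr (Σ_{i₁,…,i_m} X_{i₁ i_{α(1)}} ⋯ X_{i_m i_{α(m)}})`,
the (un-normalized) standard-representation so(N) weight of a permutation
`α` of `{1,…,m}`; the product is taken in order of increasing position. -/
noncomputable def soWeight (N m : ℕ) (α : Equiv.Perm (Fin m)) : ℚ :=
  Matrix.trace (∑ i : Fin m → Fin N,
    ((List.finRange m).map fun k => soGen N (i k) (i (α k))).prod)

lemma soGen_rev (N : ℕ) (a b : Fin N) : soGen N b.rev a.rev = - soGen N a b := by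
  simp only [soGen, Fin.rev_rev, neg_sub]

lemma prod_map_smul {m N : ℕ} (ε : Fin m → ℚ) (g : Fin m → Matrix (Fin N) (Fin N) ℚ) :
    ∀ l : List (Fin m), (l.map fun k => ε k • g k).prod = (l.map ε).prod • (l.map g).prod
  | [] => by simp
  | k :: t => by
    simp only [List.map_cons, List.prod_cons, prod_map_smul ε g t]
    rw [smul_mul_assoc, mul_smul_comm, smul_smul]

lemma soWeight_key (N m : ℕ) (β γ : Equiv.Perm (Fin m)) (hdisj : β.Disjoint γ) :
    soWeight N m (β * γ) = (-1 : ℚ) ^ β.support.card * soWeight N m (β⁻¹ * γ) := by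
  classical
  have hγfix : ∀ k, k ∈ β.support → γ k = k := fun k hk =>
    (hdisj k).resolve_left (Equiv.Perm.mem_support.mp hk)
  have hγnot : ∀ k, k ∉ β.support → γ k ∉ β.support := by
    intro k hk
    by_cases hkγ : k ∈ γ.support
    · have h1 : γ k ∈ γ.support := Equiv.Perm.apply_mem_support.mpr hkγ
      have h2 : Disjoint β.support γ.support := Equiv.Perm.disjoint_iff_disjoint_support.mp hdisj
      exact fun h => (Finset.disjoint_left.mp h2 h) h1
    · rwa [Equiv.Perm.notMem_support.mp hkγ]
  have hinvmem : ∀ k, k ∈ β.support → β⁻¹ k ∈ β.support := by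
    intro k hk
    rw [← Equiv.Perm.support_inv]
    rw [← Equiv.Perm.support_inv] at hk
    exact Equiv.Perm.apply_mem_support.mpr hk
  set Φ : (Fin m → Fin N) ≃ (Fin m → Fin N) :=
    { toFun := fun i k => if k ∈ β.support then (i (β k)).rev else i k
      invFun := fun j k => if k ∈ β.support then (j (β⁻¹ k)).rev else j k
      left_inv := by
        intro i; funext k
        by_cases hk : k ∈ β.support
        · simp only [if_pos hk, if_pos (hinvmem k hk), Fin.rev_rev]; rw [Equiv.Perm.inv_def, Equiv.apply_symm_apply]
        · simp only [if_neg hk]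
      right_inv := by
        intro j; funext k
        by_cases hk : k ∈ β.support
        · have hβk : β k ∈ β.support := Equiv.Perm.apply_mem_support.mpr hk
          simp only [if_pos hk, if_pos hβk, Equiv.Perm.inv_def, Equiv.symm_apply_apply, Fin.rev_rev]
        · simp only [if_neg hk] } with hΦ
  have hterm : ∀ i : Fin m → Fin N,
      ((List.finRange m).map fun k => soGen N (i k) (i ((β * γ) k))).prod
        = ((-1 : ℚ) ^ β.support.card) •
          ((List.finRange m).map fun k => soGen N (Φ i k) (Φ i ((β⁻¹ * γ) k))).prod := by
    intro i
    have hmap : ((List.finRange m).map fun k => soGen N (i k) (i ((β * γ) k)))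
        = ((List.finRange m).map fun k =>
            (if k ∈ β.support then (-1 : ℚ) else 1) • soGen N (Φ i k) (Φ i ((β⁻¹ * γ) k))) := by
      apply List.map_congr_left
      intro k _
      by_cases hk : k ∈ β.support
      · have h1 : γ k = k := hγfix k hk
        have hb : (β * γ) k = β k := by simp [Equiv.Perm.mul_apply, h1]
        have hb' : (β⁻¹ * γ) k = β⁻¹ k := by simp [Equiv.Perm.mul_apply, h1]
        have hΦk : Φ i k = (i (β k)).rev := if_pos hk
        have hΦk' : Φ i (β⁻¹ k) = (i k).rev := by
          show (if β⁻¹ k ∈ β.support then (i (β (β⁻¹ k))).rev else i (β⁻¹ k)) = (i k).rev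
          rw [if_pos (hinvmem k hk), Equiv.Perm.inv_def, Equiv.apply_symm_apply]
        rw [hb, hb', hΦk, hΦk', if_pos hk, soGen_rev, neg_one_smul, neg_neg]
      · have hγk : γ k ∉ β.support := hγnot k hk
        have hb : (β * γ) k = γ k := by
          simp [Equiv.Perm.mul_apply, Equiv.Perm.notMem_support.mp hγk]
        have hb' : (β⁻¹ * γ) k = γ k := by
          have h : γ k ∉ β⁻¹.support := by rwa [Equiv.Perm.support_inv]
          simp [Equiv.Perm.mul_apply, Equiv.Perm.notMem_support.mp h]
        have hΦk : Φ i k = i k := if_neg hk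
        have hΦk' : Φ i (γ k) = i (γ k) := if_neg hγk
        rw [hb, hb', hΦk, hΦk', if_neg hk, one_smul]
    rw [hmap, prod_map_smul]
    congr 1
    rw [← Fin.prod_univ_def]
    rw [Finset.prod_ite_mem Finset.univ β.support (fun _ => (-1 : ℚ)),
      Finset.univ_inter, Finset.prod_const]
  unfold soWeight
  have hsum : (∑ i : Fin m → Fin N,
      ((List.finRange m).map fun k => soGen N (i k) (i ((β * γ) k))).prod)
      = ((-1 : ℚ) ^ β.support.card) • ∑ j : Fin m → Fin N,
        ((List.finRange m).map fun k => soGen N (j k) (j ((β⁻¹ * γ) k))).prod := by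
    rw [Finset.sum_congr rfl fun i _ => hterm i, ← Finset.smul_sum]
    congr 1
    exact Equiv.sum_comp Φ fun j =>
      ((List.finRange m).map fun k => soGen N (j k) (j ((β⁻¹ * γ) k))).prod
  rw [hsum, Matrix.trace_smul, smul_eq_mul]

/-- Inverting one disjoint cycle of a permutation multiplies the
standard-representation so(N) weight by `(-1)^ℓ`, where `ℓ` is the length
of that cycle: if `β` and `γ` have disjoint supports and `β` is a cycle
whose support has cardinality `ℓ`, then `W_N(β⁻¹ ∘ γ) = (-1)^ℓ ⬝ W_N(β ∘ γ)`. -/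
theorem soWeight_invert_cycle (N m ℓ : ℕ) (hN : 1 ≤ N) (hm : 1 ≤ m)
    (β γ : Equiv.Perm (Fin m)) (hdisj : β.Disjoint γ)
    (hcyc : β.IsCycle) (hlen : β.support.card = ℓ) :
    soWeight N m (β⁻¹ * γ) = (-1 : ℚ) ^ ℓ * soWeight N m (β * γ) := by
  have hd : (β⁻¹).Disjoint γ := hdisj.inv_left
  have := soWeight_key N m β⁻¹ γ hd
  rwa [inv_inv, Equiv.Perm.support_inv, hlen] at this
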